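/- Let F/K be an extension of complete nonarchimedean fields and ρ > 0. Inside the ring F(t)_ρ (the completion of F(t) for the ρ-Gauss norm, with variable s), the intersection of the subring F⟨ρ/s⟩ (power series in s⁻¹ converging for |s| ≥ ρ) with the subring F[[s/ρ]]_an (analytic elements on the open disc |s| < ρ) equals F. -/

import Mathlib

open Polynomial

private theorem gauss_eval {F L : Type*} [NontriviallyNormedField F] [NontriviallyNormedField L]
    (ρ : ℝ) (j : F →+* L) (s : L)
    (hGauss : ∀ c : ℤ →₀ F,
      ‖∑ i ∈ c.support, j (c i) * s ^ i‖₊ =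
        c.support.sup fun i => ‖c i‖₊ * (Real.toNNReal ρ) ^ i)
    (P : Polynomial F) :
    ‖Polynomial.eval₂ j s P‖₊ =
      P.support.sup fun n => ‖P.coeff n‖₊ * (Real.toNNReal ρ) ^ n := by
  set e : ℕ ↪ ℤ := ⟨fun n => (n : ℤ), fun a b h => Int.ofNat.inj h⟩ with he
  set c : ℤ →₀ F := Finsupp.embDomain e P.toFinsupp.coeff with hc
  have hsupp : c.support = P.support.map e := Finsupp.support_embDomain e P.toFinsupp.coeff
  have happ : ∀ n : ℕ, c (e n) = P.coeff n := fun n => Finsupp.embDomain_apply_self e P.toFinsupp.coeff n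
  have h1 : Polynomial.eval₂ j s P = ∑ i ∈ c.support, j (c i) * s ^ i := by
    rw [hsupp, Finset.sum_map, Polynomial.eval₂_eq_sum, Polynomial.sum_def]
    refine Finset.sum_congr rfl fun n _ => ?_
    rw [happ n]
    rw [show e n = (n : ℤ) from rfl, zpow_natCast]
  rw [h1, hGauss c, hsupp, Finset.sup_map]
  refine Finset.sup_congr rfl fun n _ => ?_
  simp only [Function.comp_apply, happ n]
  rw [show e n = (n : ℤ) from rfl, zpow_natCast]

private theorem nnnorm_msum_le {Ω : Type*} [SeminormedAddCommGroup Ω] [IsUltrametricDist Ω]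
    (m : Multiset Ω) (C : NNReal) (h : ∀ x ∈ m, ‖x‖₊ ≤ C) : ‖m.sum‖₊ ≤ C := by
  induction m using Multiset.induction with
  | empty => simp
  | cons a t ih =>
    rw [Multiset.sum_cons]
    refine le_trans (IsUltrametricDist.nnnorm_add_le_max _ _) (max_le ?_ ?_)
    · exact h a (Multiset.mem_cons_self a t)
    · exact ih fun x hx => h x (Multiset.mem_cons_of_mem hx)

private theorem nnnorm_mprod {Ω : Type*} [NormedField Ω] (S : Multiset Ω) :
    ‖S.prod‖₊ = (S.map fun z => ‖z‖₊).prod := by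
  induction S using Multiset.induction with
  | empty => simp
  | cons a t ih => simp [ih]

private theorem coeff_le_of_roots {F Ω : Type*} [NontriviallyNormedField F] [IsUltrametricDist F]
    [NormedField Ω] [IsUltrametricDist Ω] [IsAlgClosed Ω]
    (ρ : ℝ) (hρ : 0 < ρ) (jΩ : F →+* Ω) (hjΩ : ∀ a : F, ‖jΩ a‖ = ‖a‖)
    (Q : Polynomial F) (hQ : Q ≠ 0)
    (hroots : ∀ z : Ω, Polynomial.eval₂ jΩ z Q = 0 → ρ ≤ ‖z‖) (i : ℕ) :
    ‖Q.coeff i‖₊ * ρ.toNNReal ^ i ≤ ‖Q.coeff 0‖₊ := by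
  have hjΩn : ∀ a : F, ‖jΩ a‖₊ = ‖a‖₊ := fun a => NNReal.coe_injective (hjΩ a)
  set r : NNReal := ρ.toNNReal with hrdef
  have hr : 0 < r := Real.toNNReal_pos.mpr hρ
  set Q' : Polynomial Ω := Q.map jΩ with hQ'def
  have hQ' : Q' ≠ 0 := Polynomial.map_ne_zero hQ
  set n := Q'.natDegree with hn
  have hcard : Multiset.card Q'.roots = n :=
    Polynomial.splits_iff_card_roots.1 (IsAlgClosed.splits Q')
  have hR : ∀ z ∈ Q'.roots, r ≤ ‖z‖₊ := by
    intro z hz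
    have hz' : Q'.eval z = 0 := (Polynomial.mem_roots hQ').1 hz
    rw [hQ'def, Polynomial.eval_map] at hz'
    exact Real.toNNReal_le_iff_le_coe.mpr (by simpa using hroots z hz')
  rcases le_or_gt i n with hi | hi
  case inr =>
    have : Q.coeff i = 0 := by
      apply Polynomial.coeff_eq_zero_of_natDegree_lt
      rwa [hn, Polynomial.natDegree_map] at hi
    simp [this]
  have hcoe : ∀ k, ‖Q.coeff k‖₊ = ‖Q'.coeff k‖₊ := by
    intro k; rw [hQ'def, Polynomial.coeff_map, hjΩn]
  -- constant coefficient
  have hsplit := Polynomial.C_leadingCoeff_mul_prod_multiset_X_sub_C hcard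
  have h0 : ‖Q'.coeff 0‖₊ = ‖Q'.leadingCoeff‖₊ * (Q'.roots.map fun z => ‖z‖₊).prod := by
    have e1 : Q'.coeff 0 = Q'.leadingCoeff * (Q'.roots.map fun z => -z).prod := by
      conv_lhs => rw [Polynomial.coeff_zero_eq_eval_zero, ← hsplit]
      rw [Polynomial.eval_mul, Polynomial.eval_C, Polynomial.eval_multiset_prod,
        Multiset.map_map]
      congr 1
      refine congrArg _ (Multiset.map_congr rfl fun z _ => ?_)
      simp
    rw [e1, nnnorm_mul, nnnorm_mprod, Multiset.map_map]
    congr 1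
    refine congrArg _ (Multiset.map_congr rfl fun z _ => ?_)
    simp
  have hvi := Polynomial.coeff_eq_esymm_roots_of_card hcard (k := i) (by rwa [← hn])
  rw [hcoe i, hcoe 0, hvi, h0]
  simp only [nnnorm_mul, nnnorm_pow, nnnorm_neg, nnnorm_one, one_pow, mul_one]
  rw [mul_assoc]
  refine mul_le_mul_right ?_ _
  -- ‖esymm (n - i)‖ * r^i ≤ prod of root norms
  have hri : (0:NNReal) < r ^ i := by positivity
  have key : ‖Q'.roots.esymm (Q'.natDegree - i)‖₊ ≤ (Q'.roots.map fun z => ‖z‖₊).prod / r ^ i := by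
    refine nnnorm_msum_le _ _ ?_
    intro x hx
    obtain ⟨S, hS, rfl⟩ := Multiset.mem_map.1 hx
    obtain ⟨hle, hcardS⟩ := Multiset.mem_powersetCard.1 hS
    obtain ⟨T, hT⟩ := Multiset.le_iff_exists_add.1 hle
    have hcardT : Multiset.card T = i := by
      have := hcard
      rw [hT, Multiset.card_add] at this
      rw [hcardS, ← hn] at this
      omega
    rw [le_div_iff₀ hri, nnnorm_mprod, hT, Multiset.map_add, Multiset.prod_add]
    refine mul_le_mul_right ?_ _
    calc r ^ i = r ^ Multiset.card (T.map fun z => ‖z‖₊) := by rw [Multiset.card_map, hcardT]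
    _ ≤ (T.map fun z => ‖z‖₊).prod := Multiset.pow_card_le_prod (by
        intro x hx
        obtain ⟨z, hz, rfl⟩ := Multiset.mem_map.1 hx
        exact hR z (by rw [hT]; exact Multiset.mem_add.2 (Or.inr hz)))
  calc ‖Q'.roots.esymm (Q'.natDegree - i)‖₊ * r ^ i
      ≤ ((Q'.roots.map fun z => ‖z‖₊).prod / r ^ i) * r ^ i := mul_le_mul_left key _
    _ = (Q'.roots.map fun z => ‖z‖₊).prod := div_mul_cancel₀ _ hri.ne'

private theorem dominant {F : Type*} [NontriviallyNormedField F] [IsUltrametricDist F]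
    (r : NNReal) (hr : 0 < r) (h Q : Polynomial F) (hh : h ≠ 0)
    (hQ0 : Q.coeff 0 ≠ 0)
    (hQb : ∀ i : ℕ, ‖Q.coeff i‖₊ * r ^ i ≤ ‖Q.coeff 0‖₊) :
    ∃ i₀ ∈ h.support, ‖(h * Q).coeff i₀‖₊ * r ^ i₀ =
      (h.support.sup fun n => ‖h.coeff n‖₊ * r ^ n) * ‖Q.coeff 0‖₊ := by
  classical
  set G := h.support.sup fun n => ‖h.coeff n‖₊ * r ^ n with hG
  have hne : h.support.Nonempty := Polynomial.nonempty_support_iff.2 hh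
  set S := h.support.filter (fun n => ‖h.coeff n‖₊ * r ^ n = G) with hS
  have hSne : S.Nonempty := by
    obtain ⟨n, hn, hval⟩ := Finset.exists_mem_eq_sup h.support hne
      (fun n => ‖h.coeff n‖₊ * r ^ n)
    exact ⟨n, Finset.mem_filter.2 ⟨hn, hval.symm⟩⟩
  set i₀ := S.min' hSne with hi₀def
  have hi₀S : i₀ ∈ S := S.min'_mem hSne
  obtain ⟨hi₀supp, hi₀val⟩ := Finset.mem_filter.1 hi₀S
  refine ⟨i₀, hi₀supp, ?_⟩
  have hrpos : (0:NNReal) < r ^ i₀ := pow_pos hr _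
  have hGpos : 0 < G := by
    rw [← hi₀val]
    have h1 : h.coeff i₀ ≠ 0 := Polynomial.mem_support_iff.1 hi₀supp
    exact mul_pos (by simpa using h1) hrpos
  have hQpos : (0:NNReal) < ‖Q.coeff 0‖₊ := by simpa using hQ0
  have hlt : ∀ k < i₀, ‖h.coeff k‖₊ * r ^ k < G := by
    intro k hk
    rcases eq_or_ne (h.coeff k) 0 with h0 | h0
    · simpa [h0] using hGpos
    refine lt_of_le_of_ne
      (Finset.le_sup (f := fun n => ‖h.coeff n‖₊ * r ^ n)
        (Polynomial.mem_support_iff.2 h0)) fun heq => ?_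
    have : k ∈ S := Finset.mem_filter.2 ⟨Polynomial.mem_support_iff.2 h0, heq⟩
    exact absurd (S.min'_le k this) (by omega)
  have hmain : ‖h.coeff i₀ * Q.coeff 0‖₊ * r ^ i₀ = G * ‖Q.coeff 0‖₊ := by
    rw [nnnorm_mul, ← hi₀val]; ring
  set rest := ∑ p ∈ (Finset.HasAntidiagonal.antidiagonal i₀).erase (i₀, 0), h.coeff p.1 * Q.coeff p.2 with hrest'
  have hrest : ‖rest‖₊ * r ^ i₀ < G * ‖Q.coeff 0‖₊ := by
    have hb : ‖rest‖₊ ≤ ((Finset.HasAntidiagonal.antidiagonal i₀).erase (i₀, 0)).sup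
        (fun p => ‖h.coeff p.1 * Q.coeff p.2‖₊) := Finset.nnnorm_sum_le_sup_nnnorm _ _
    have hdivpos : (0:NNReal) < G * ‖Q.coeff 0‖₊ / r ^ i₀ := by positivity
    have hsup : ((Finset.HasAntidiagonal.antidiagonal i₀).erase (i₀, 0)).sup
        (fun p => ‖h.coeff p.1 * Q.coeff p.2‖₊) < G * ‖Q.coeff 0‖₊ / r ^ i₀ := by
      refine Finset.sup_lt_iff hdivpos |>.2 fun p hp => ?_
      obtain ⟨hpne, hpad⟩ := Finset.mem_erase.1 hp
      have hkl : p.1 + p.2 = i₀ := Finset.HasAntidiagonal.mem_antidiagonal.1 hpad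
      have hk : p.1 < i₀ := by
        rcases Nat.lt_or_ge p.1 i₀ with h' | h'
        · exact h'
        · exact absurd (Prod.ext_iff.2 ⟨by omega, by omega⟩) hpne
      rw [lt_div_iff₀ hrpos, nnnorm_mul, ← hkl, pow_add,
        show ‖h.coeff p.1‖₊ * ‖Q.coeff p.2‖₊ * (r ^ p.1 * r ^ p.2)
          = (‖h.coeff p.1‖₊ * r ^ p.1) * (‖Q.coeff p.2‖₊ * r ^ p.2) by ring]
      calc (‖h.coeff p.1‖₊ * r ^ p.1) * (‖Q.coeff p.2‖₊ * r ^ p.2)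
          ≤ (‖h.coeff p.1‖₊ * r ^ p.1) * ‖Q.coeff 0‖₊ := mul_le_mul_right (hQb p.2) _
        _ < G * ‖Q.coeff 0‖₊ := mul_lt_mul_of_pos_right (hlt p.1 hk) hQpos
    calc ‖rest‖₊ * r ^ i₀ ≤ _ * r ^ i₀ := mul_le_mul_left hb _
    _ < (G * ‖Q.coeff 0‖₊ / r ^ i₀) * r ^ i₀ := mul_lt_mul_of_pos_right hsup hrpos
    _ = G * ‖Q.coeff 0‖₊ := div_mul_cancel₀ _ hrpos.ne'
  have hcoeff : (h * Q).coeff i₀ = h.coeff i₀ * Q.coeff 0 + rest := by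
    rw [Polynomial.coeff_mul, hrest', ← Finset.add_sum_erase _ _
      ((Finset.HasAntidiagonal.mem_antidiagonal (a := (i₀, 0))).2 (by simp))]
  have hltnorm : ‖rest‖₊ < ‖h.coeff i₀ * Q.coeff 0‖₊ := by
    have := hrest
    rw [← hmain] at this
    exact lt_of_mul_lt_mul_right this (le_of_lt hrpos)
  rw [hcoeff, IsUltrametricDist.nnnorm_add_eq_max_of_nnnorm_ne_nnnorm (ne_of_gt hltnorm),
    max_eq_left hltnorm.le, hmain]
private theorem key_est {F L Ω : Type*}
    [NontriviallyNormedField F] [IsUltrametricDist F]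
    [NontriviallyNormedField L] [IsUltrametricDist L]
    [NormedField Ω] [IsUltrametricDist Ω] [IsAlgClosed Ω]
    (ρ : ℝ) (hρ : 0 < ρ)
    (j : F →+* L) (jΩ : F →+* Ω) (hjΩ : ∀ a : F, ‖jΩ a‖ = ‖a‖)
    (s : L) (hs : s ≠ 0)
    (hGauss : ∀ c : ℤ →₀ F,
      ‖∑ i ∈ c.support, j (c i) * s ^ i‖₊ =
        c.support.sup fun i => ‖c i‖₊ * (Real.toNNReal ρ) ^ i)
    (c : ℤ →₀ F) (hc : ∀ i ∈ c.support, i ≤ -1)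
    (P Q : Polynomial F) (hQne : Q ≠ 0)
    (hroots : ∀ z : Ω, Polynomial.eval₂ jΩ z Q = 0 → ρ ≤ ‖z‖) :
    ‖∑ i ∈ c.support, j (c i) * s ^ i‖ ≤
      ‖(∑ i ∈ c.support, j (c i) * s ^ i) -
        Polynomial.eval₂ j s P / Polynomial.eval₂ j s Q‖ := by
  set r : NNReal := ρ.toNNReal with hrdef
  have hr : 0 < r := Real.toNNReal_pos.mpr hρ
  set g := ∑ i ∈ c.support, j (c i) * s ^ i with hgdef
  have hQ0 : Q.coeff 0 ≠ 0 := by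
    intro h0
    have := hroots 0 (by rw [Polynomial.eval₂_at_zero, h0, map_zero])
    simp at this; linarith
  have hQb := fun i => coeff_le_of_roots ρ hρ jΩ hjΩ Q hQne hroots i
  have hQpos : (0:NNReal) < ‖Q.coeff 0‖₊ := by simpa using hQ0
  have hQg : ‖Polynomial.eval₂ j s Q‖₊ = ‖Q.coeff 0‖₊ := by
    refine le_antisymm ?_ ?_
    · rw [gauss_eval ρ j s hGauss Q]
      exact Finset.sup_le fun n _ => hQb n
    · rw [gauss_eval ρ j s hGauss Q]
      have := Finset.le_sup (f := fun n => ‖Q.coeff n‖₊ * r ^ n)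
        (Polynomial.mem_support_iff.2 hQ0)
      simpa using this
  have hQs : Polynomial.eval₂ j s Q ≠ 0 := by
    intro h0
    exact hQpos.ne' (by rw [← hQg, h0, nnnorm_zero])
  by_cases hg0 : g = 0
  · rw [hg0]; simp; positivity
  -- setup m and h
  set m : ℕ := c.support.sup Int.natAbs with hmdef
  have hm : ∀ i ∈ c.support, 0 ≤ i + m ∧ (i + m).toNat < m := by
    intro i hi
    have h1 : i.natAbs ≤ m := Finset.le_sup (f := Int.natAbs) hi
    have h2 : i ≤ -1 := hc i hi
    omega
  set h : Polynomial F := ∑ i ∈ c.support, Polynomial.C (c i) * Polynomial.X ^ (i + m).toNat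
    with hhdef
  have hsm : (s : L) ^ (m : ℤ) ≠ 0 := zpow_ne_zero _ hs
  have hhs : Polynomial.eval₂ j s h = s ^ (m : ℤ) * g := by
    rw [hhdef, Polynomial.eval₂_finset_sum, hgdef, Finset.mul_sum]
    refine Finset.sum_congr rfl fun i hi => ?_
    rw [Polynomial.eval₂_mul, Polynomial.eval₂_C, Polynomial.eval₂_X_pow,
      ← zpow_natCast s ((i + m).toNat), Int.toNat_of_nonneg (hm i hi).1,
      zpow_add₀ hs]
    ring
  have hh0 : h ≠ 0 := by
    intro h0
    rw [h0, Polynomial.eval₂_zero] at hhs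
    exact hg0 (by
      rcases mul_eq_zero.1 hhs.symm with h' | h'
      · exact absurd h' hsm
      · exact h')
  have hcm : ∀ n, m ≤ n → h.coeff n = 0 := by
    intro n hn
    rw [hhdef, Polynomial.finset_sum_coeff]
    refine Finset.sum_eq_zero fun i hi => ?_
    rw [Polynomial.coeff_C_mul, Polynomial.coeff_X_pow]
    have : n ≠ (i + m).toNat := by have := hm i hi; omega
    simp [this]
  obtain ⟨i₀, hi₀supp, hi₀⟩ := dominant r hr h Q hh0 hQ0 hQb
  have hi₀m : i₀ < m := by
    by_contra hcon
    exact Polynomial.mem_support_iff.1 hi₀supp (hcm i₀ (by omega))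
  set G := h.support.sup fun n => ‖h.coeff n‖₊ * r ^ n with hGdef
  have hGpos : 0 < G := by
    refine lt_of_lt_of_le ?_ (Finset.le_sup (f := fun n => ‖h.coeff n‖₊ * r ^ n) hi₀supp)
    have h1 : h.coeff i₀ ≠ 0 := Polynomial.mem_support_iff.1 hi₀supp
    exact mul_pos (by simpa using h1) (pow_pos hr _)
  set N : Polynomial F := h * Q - P * Polynomial.X ^ m with hNdef
  have hNcoeff : N.coeff i₀ = (h * Q).coeff i₀ := by
    rw [hNdef, Polynomial.coeff_sub, Polynomial.coeff_mul_X_pow', if_neg (by omega), sub_zero]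
  have hNc0 : N.coeff i₀ ≠ 0 := by
    intro h0
    rw [h0] at hNcoeff
    rw [← hNcoeff] at hi₀
    simp only [nnnorm_zero, zero_mul] at hi₀
    exact absurd hi₀.symm (ne_of_gt (mul_pos hGpos hQpos))
  have hNs : G * ‖Q.coeff 0‖₊ ≤ ‖Polynomial.eval₂ j s N‖₊ := by
    rw [gauss_eval ρ j s hGauss N]
    calc G * ‖Q.coeff 0‖₊ = ‖N.coeff i₀‖₊ * r ^ i₀ := by rw [hNcoeff, hi₀]
    _ ≤ _ := Finset.le_sup (f := fun n => ‖N.coeff n‖₊ * r ^ n)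
        (Polynomial.mem_support_iff.2 hNc0)
  have hhG : ‖Polynomial.eval₂ j s h‖₊ = G := gauss_eval ρ j s hGauss h
  have hsr : ‖s‖₊ = r := by
    have h1 := hGauss (Finsupp.single 1 1)
    rw [Finsupp.support_single_ne_zero _ one_ne_zero] at h1
    simpa using h1
  have hrm : (0:NNReal) < r ^ (m:ℤ) := zpow_pos hr _
  have hGeq : r ^ (m:ℤ) * ‖g‖₊ = G := by
    rw [← hhG, hhs, nnnorm_mul, nnnorm_zpow, hsr]
  have hgval : ‖g‖₊ = (r ^ (m:ℤ))⁻¹ * G := by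
    rw [← hGeq, ← mul_assoc, inv_mul_cancel₀ hrm.ne', one_mul]
  -- the identity
  have hNeval : Polynomial.eval₂ j s N =
      s ^ (m:ℤ) * g * Polynomial.eval₂ j s Q - Polynomial.eval₂ j s P * s ^ (m:ℤ) := by
    rw [hNdef, Polynomial.eval₂_sub, Polynomial.eval₂_mul, Polynomial.eval₂_mul,
      Polynomial.eval₂_X_pow, hhs, ← zpow_natCast s m]
  have hid : g - Polynomial.eval₂ j s P / Polynomial.eval₂ j s Q =
      (s ^ (m:ℤ))⁻¹ * Polynomial.eval₂ j s N / Polynomial.eval₂ j s Q := by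
    rw [hNeval]
    field_simp
  rw [← coe_nnnorm, ← coe_nnnorm, NNReal.coe_le_coe, hid]
  have : ‖(s ^ (m:ℤ))⁻¹ * Polynomial.eval₂ j s N / Polynomial.eval₂ j s Q‖₊ =
      (r ^ (m:ℤ))⁻¹ * ‖Polynomial.eval₂ j s N‖₊ * ‖Q.coeff 0‖₊⁻¹ := by
    rw [nnnorm_div, nnnorm_mul, nnnorm_inv, nnnorm_zpow, hsr, hQg, div_eq_mul_inv]
  rw [this, hgval]
  calc (r ^ (m:ℤ))⁻¹ * G
      = (r ^ (m:ℤ))⁻¹ * ((G * ‖Q.coeff 0‖₊) * ‖Q.coeff 0‖₊⁻¹) := by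
        rw [mul_assoc, mul_inv_cancel₀ hQpos.ne', mul_one]
    _ ≤ (r ^ (m:ℤ))⁻¹ * (‖Polynomial.eval₂ j s N‖₊ * ‖Q.coeff 0‖₊⁻¹) :=
        mul_le_mul_right (mul_le_mul_left hNs _) _
    _ = (r ^ (m:ℤ))⁻¹ * ‖Polynomial.eval₂ j s N‖₊ * ‖Q.coeff 0‖₊⁻¹ := by ring

private theorem Qs_ne {F L Ω : Type*}
    [NontriviallyNormedField F] [IsUltrametricDist F]
    [NontriviallyNormedField L] [IsUltrametricDist L]
    [NormedField Ω] [IsUltrametricDist Ω] [IsAlgClosed Ω]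
    (ρ : ℝ) (hρ : 0 < ρ)
    (j : F →+* L) (jΩ : F →+* Ω) (hjΩ : ∀ a : F, ‖jΩ a‖ = ‖a‖)
    (s : L)
    (hGauss : ∀ c : ℤ →₀ F,
      ‖∑ i ∈ c.support, j (c i) * s ^ i‖₊ =
        c.support.sup fun i => ‖c i‖₊ * (Real.toNNReal ρ) ^ i)
    (Q : Polynomial F) (hQne : Q ≠ 0)
    (hroots : ∀ z : Ω, Polynomial.eval₂ jΩ z Q = 0 → ρ ≤ ‖z‖) :
    Polynomial.eval₂ j s Q ≠ 0 := by
  have hQ0 : Q.coeff 0 ≠ 0 := by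
    intro h0
    have := hroots 0 (by rw [Polynomial.eval₂_at_zero, h0, map_zero])
    simp at this; linarith
  intro h0
  have h1 : ‖Q.coeff 0‖₊ * (Real.toNNReal ρ) ^ (0:ℕ) ≤ ‖Polynomial.eval₂ j s Q‖₊ := by
    rw [gauss_eval ρ j s hGauss Q]
    exact Finset.le_sup (f := fun n => ‖Q.coeff n‖₊ * (Real.toNNReal ρ) ^ n)
      (Polynomial.mem_support_iff.2 hQ0)
  rw [h0, nnnorm_zero, pow_zero, mul_one] at h1
  exact hQ0 (by simpa using le_antisymm h1 zero_le)

open Filter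

/-- let `F/K`-style `F` be a complete nonarchimedean field, `ρ > 0`, and
let `L` be (a model of) the completion `F(t)_ρ` of the rational function field `F(s)`
with respect to the `ρ`-Gauss norm: a complete nonarchimedean field equipped with an
isometric embedding `j : F → L` and an element `s` with the Gauss-norm property for
Laurent polynomials, such that the subfield generated by `j(F)` and `s` is dense.
Let `Ω` be an algebraically closed nonarchimedean field isometrically containing `F`
(where roots of denominators are measured).  Then the intersection of
`F⟨ρ/s⟩` (the closure of `F[s⁻¹]`, i.e. of Laurent polynomials supported in degrees
`≤ 0`) with `F[[s/ρ]]_an` (the ring of analytic elements on the open disc `|s| < ρ`,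
i.e. the closure of the rational functions `P(s)/Q(s)` where `Q` has no root of norm
`< ρ`) is exactly `F`, i.e. the range of `j`. -/
theorem stmt2 {F L Ω : Type*}
    [NontriviallyNormedField F] [CompleteSpace F] [IsUltrametricDist F]
    [NontriviallyNormedField L] [CompleteSpace L] [IsUltrametricDist L]
    [NormedField Ω] [IsUltrametricDist Ω] [IsAlgClosed Ω]
    (ρ : ℝ) (hρ : 0 < ρ)
    (j : F →+* L) (hj : ∀ a : F, ‖j a‖ = ‖a‖)
    (jΩ : F →+* Ω) (hjΩ : ∀ a : F, ‖jΩ a‖ = ‖a‖)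
    (s : L) (hs : s ≠ 0)
    -- Gauss norm property: for every Laurent polynomial `∑ c_i s^i`,
    -- `‖∑ c_i s^i‖ = max_i ‖c_i‖ ρ^i`
    (hGauss : ∀ c : ℤ →₀ F,
      ‖∑ i ∈ c.support, j (c i) * s ^ i‖₊ =
        c.support.sup fun i => ‖c i‖₊ * (Real.toNNReal ρ) ^ i)
    -- `L` is the completion of `F(s)`: the subfield generated by `j(F)` and `s` is dense
    (hdense : Dense (Subfield.closure (Set.range j ∪ {s}) : Set L)) :
    -- `F⟨ρ/s⟩` : closure of polynomials in `s⁻¹`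
    {x : L | ∀ ε : ℝ, 0 < ε → ∃ c : ℤ →₀ F, (∀ i ∈ c.support, i ≤ 0) ∧
        ‖x - ∑ i ∈ c.support, j (c i) * s ^ i‖ ≤ ε} ∩
    -- `F[[s/ρ]]_an` : closure of rational functions with no poles in `|s| < ρ`
    {x : L | ∀ ε : ℝ, 0 < ε → ∃ P Q : Polynomial F, Q ≠ 0 ∧
        (∀ z : Ω, Polynomial.eval₂ jΩ z Q = 0 → ρ ≤ ‖z‖) ∧
        ‖x - Polynomial.eval₂ j s P / Polynomial.eval₂ j s Q‖ ≤ ε} =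
    Set.range j := by
  apply Set.Subset.antisymm
  · rintro x ⟨hA, hB⟩
    have hisom : Isometry j := AddMonoidHomClass.isometry_of_norm j hj
    have hclosed : IsClosed (Set.range j) := hisom.isClosedEmbedding.isClosed_range
    have hx : x ∈ closure (Set.range j) := by
      rw [Metric.mem_closure_iff]
      intro ε hε
      obtain ⟨c, hc0, hcx⟩ := hA (ε/2) (by positivity)
      obtain ⟨P, Q, hQ, hroots, hPQ⟩ := hB (ε/2) (by positivity)
      refine ⟨j (c 0), ⟨c 0, rfl⟩, ?_⟩
      have hQs : Polynomial.eval₂ j s Q ≠ 0 := Qs_ne ρ hρ j jΩ hjΩ s hGauss Q hQ hroots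
      -- split the constant term off
      have hadd : ∀ f g : ℤ →₀ F, (f + g).sum (fun i a => j a * s ^ i)
          = f.sum (fun i a => j a * s ^ i) + g.sum (fun i a => j a * s ^ i) :=
        fun f g => Finsupp.sum_add_index' (fun i => by simp)
          (fun i b₁ b₂ => by rw [map_add, add_mul])
      have hsingle : (Finsupp.single (0:ℤ) (c 0)).sum (fun i a => j a * s ^ i) = j (c 0) := by
        rw [Finsupp.sum_single_index (by simp)]
        simp
      have hsplit : ∑ i ∈ c.support, j (c i) * s ^ i
          = j (c 0) + ∑ i ∈ (Finsupp.erase 0 c).support, j ((Finsupp.erase 0 c) i) * s ^ i := by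
        have h1 : c.sum (fun i a => j a * s ^ i)
            = (Finsupp.single (0:ℤ) (c 0) + Finsupp.erase 0 c).sum (fun i a => j a * s ^ i) := by
          rw [Finsupp.single_add_erase]
        rw [hadd, hsingle] at h1
        exact h1
      have hc'supp : ∀ i ∈ (Finsupp.erase 0 c).support, i ≤ -1 := by
        intro i hi
        rw [Finsupp.support_erase, Finset.mem_erase] at hi
        have := hc0 i hi.2
        have := hi.1
        omega
      have key := key_est ρ hρ j jΩ hjΩ s hs hGauss (Finsupp.erase 0 c) hc'supp
        (P - Polynomial.C (c 0) * Q) Q hQ hroots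
      have hshift : Polynomial.eval₂ j s (P - Polynomial.C (c 0) * Q) / Polynomial.eval₂ j s Q
          = Polynomial.eval₂ j s P / Polynomial.eval₂ j s Q - j (c 0) := by
        rw [Polynomial.eval₂_sub, Polynomial.eval₂_mul, Polynomial.eval₂_C]
        field_simp
      rw [hshift] at key
      set g' := ∑ i ∈ (Finsupp.erase 0 c).support, j ((Finsupp.erase 0 c) i) * s ^ i with hg'
      have hd1 : ‖x - j (c 0) - g'‖ ≤ ε/2 := by
        have heq : x - j (c 0) - g' = x - (j (c 0) + g') := by ring
        rw [heq, ← hsplit]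
        exact hcx
      have hd2 : ‖g' - (Polynomial.eval₂ j s P / Polynomial.eval₂ j s Q - j (c 0))‖ ≤ ε/2 := by
        have heq : g' - (Polynomial.eval₂ j s P / Polynomial.eval₂ j s Q - j (c 0))
            = (x - Polynomial.eval₂ j s P / Polynomial.eval₂ j s Q) + -(x - j (c 0) - g') := by
          ring
        rw [heq]
        refine le_trans (IsUltrametricDist.norm_add_le_max _ _) (max_le hPQ ?_)
        rw [norm_neg]
        exact hd1
      have hg'small : ‖g'‖ ≤ ε/2 := le_trans key hd2
      have hfinal : ‖x - j (c 0)‖ ≤ ε/2 := by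
        have heq : x - j (c 0) = (x - j (c 0) - g') + g' := by ring
        rw [heq]
        exact le_trans (IsUltrametricDist.norm_add_le_max _ _) (max_le hd1 hg'small)
      rw [dist_eq_norm]
      calc ‖x - j (c 0)‖ ≤ ε/2 := hfinal
      _ < ε := by linarith
    rwa [hclosed.closure_eq] at hx
  · rintro x ⟨a, rfl⟩
    constructor
    · intro ε hε
      refine ⟨Finsupp.single 0 a, ?_, ?_⟩
      · intro i hi
        have h1 := Finsupp.support_single_subset hi
        simp only [Finset.mem_singleton] at h1
        omega
      · rcases eq_or_ne a 0 with rfl | ha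
        · simp [le_of_lt hε]
        · rw [Finsupp.support_single_ne_zero _ ha]
          simp [le_of_lt hε]
    · intro ε hε
      refine ⟨Polynomial.C a, 1, one_ne_zero, ?_, ?_⟩
      · intro z hz
        simp [Polynomial.eval₂_one] at hz
      · simp [le_of_lt hε]
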